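/- Let k ≥ 2 and p ∈ Δ_k with p_1 ≥ p_2 ≥ … ≥ p_k, and suppose p_1 = … = p_i > p_{i+1} for some i ∈ {1,…,k−1}. Writing p(n) = F^n(p), the sequences (p_{i+1}(n))_{n≥1}, (p_{i+2}(n))_{n≥1}, …, (p_k(n))_{n≥1} all converge to zero. -/

import Mathlib

open Filter Topology

/-- The map F on ℝ^{k+1} (coordinates indexed 0,…,k; the last coordinate is the
"empty" state).  For i < k, F_i(x) = x_i² + 2 x_i x_k; the last coordinate is
F_k(x) = x_k² + 2 Σ_{a<b<k} x_a x_b. -/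
noncomputable def Fmap (k : ℕ) (x : Fin (k + 1) → ℝ) : Fin (k + 1) → ℝ :=
  fun i =>
    if i.val < k then x i ^ 2 + 2 * x i * x (Fin.last k)
    else x (Fin.last k) ^ 2 +
      2 * ∑ a : Fin (k + 1), ∑ b : Fin (k + 1),
        (if a.val < b.val ∧ b.val < k then x a * x b else 0)

/-- The open simplex Δ_k ⊆ ℝ^{k+1}. -/
def simplex (k : ℕ) : Set (Fin (k + 1) → ℝ) :=
  {p | (∑ i, p i) = 1 ∧ ∀ i, 0 < p i}

lemma sq_sum (m : ℕ) (y : Fin m → ℝ) :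
    (∑ i, y i)^2 = ∑ i, y i^2 + 2 * ∑ a, ∑ b, (if a.val < b.val then y a * y b else 0) := by
  have expand : ∀ a b : Fin m, y a * y b =
      (if a.val < b.val then y a * y b else 0) + (if a = b then y a * y b else 0)
        + (if b.val < a.val then y a * y b else 0) := by
    intro a b
    rcases lt_trichotomy a.val b.val with h | h | h
    · have h1 : ¬ a = b := by intro e; subst e; omega
      have h2 : ¬ b.val < a.val := by omega
      simp [h, h1, h2]
    · have h1 : a = b := Fin.ext h
      have h2 : ¬ a.val < b.val := by omega
      have h3 : ¬ b.val < a.val := by omega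
      simp [h1, h2, h3]
    · have h1 : ¬ a = b := by intro e; subst e; omega
      have h2 : ¬ a.val < b.val := by omega
      simp [h, h1, h2]
  have h0 : (∑ i, y i)^2 = ∑ a, ∑ b, y a * y b := by
    rw [sq, Finset.sum_mul_sum]
  rw [h0]
  have h1 : ∑ a, ∑ b, y a * y b
      = (∑ a : Fin m, ∑ b : Fin m, (if a.val < b.val then y a * y b else 0))
      + (∑ a : Fin m, ∑ b : Fin m, (if a = b then y a * y b else 0))
      + (∑ a : Fin m, ∑ b : Fin m, (if b.val < a.val then y a * y b else 0)) := by
    rw [← Finset.sum_add_distrib, ← Finset.sum_add_distrib]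
    refine Finset.sum_congr rfl fun a _ => ?_
    rw [← Finset.sum_add_distrib, ← Finset.sum_add_distrib]
    exact Finset.sum_congr rfl fun b _ => expand a b
  rw [h1]
  have h2 : (∑ a : Fin m, ∑ b : Fin m, (if a = b then y a * y b else 0)) = ∑ i, y i ^ 2 := by
    refine Finset.sum_congr rfl fun a _ => ?_
    rw [show (∑ b : Fin m, if a = b then y a * y b else 0)
        = ∑ b : Fin m, if b = a then y a * y b else 0 from
      Finset.sum_congr rfl fun b _ => by
        rcases eq_or_ne a b with h|h
        · subst h; simp
        · simp [h, h.symm]]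
    rw [Finset.sum_ite_eq' Finset.univ a (fun b => y a * y b)]
    simp [sq]
  have h3 : (∑ a : Fin m, ∑ b : Fin m, (if b.val < a.val then y a * y b else 0))
      = ∑ a : Fin m, ∑ b : Fin m, (if a.val < b.val then y a * y b else 0) := by
    rw [Finset.sum_comm]
    refine Finset.sum_congr rfl fun a _ => Finset.sum_congr rfl fun b _ => ?_
    rw [mul_comm]
  rw [h2, h3]; ring

lemma Fmap_sum (k : ℕ) (x : Fin (k + 1) → ℝ) : ∑ i, Fmap k x i = (∑ i, x i)^2 := by
  have hT : (∑ a : Fin (k + 1), ∑ b : Fin (k + 1),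
        (if a.val < b.val ∧ b.val < k then x a * x b else 0))
      = ∑ a : Fin k, ∑ b : Fin k,
        (if a.val < b.val then x a.castSucc * x b.castSucc else 0) := by
    rw [Fin.sum_univ_castSucc]
    have hlast : (∑ b : Fin (k+1), (if (Fin.last k).val < b.val ∧ b.val < k then x (Fin.last k) * x b else 0)) = 0 := by
      refine Finset.sum_eq_zero fun b _ => ?_
      have : ¬ ((Fin.last k).val < b.val ∧ b.val < k) := by
        simp only [Fin.val_last]; omega
      simp only [this, if_false]
    rw [hlast, add_zero]
    refine Finset.sum_congr rfl fun a _ => ?_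
    rw [Fin.sum_univ_castSucc]
    have hlast2 : (if (a.castSucc).val < (Fin.last k).val ∧ (Fin.last k).val < k then x a.castSucc * x (Fin.last k) else 0) = 0 := by
      have : ¬ ((a.castSucc).val < (Fin.last k).val ∧ (Fin.last k).val < k) := by
        simp only [Fin.val_last]; omega
      simp [this]
    rw [hlast2, add_zero]
    refine Finset.sum_congr rfl fun b _ => ?_
    have hb : (b.castSucc).val < k := by simp [b.isLt]
    simp only [Fin.coe_castSucc]
    rcases lt_or_ge a.val b.val with h | h
    · simp [h, hb]
    · have : ¬ a.val < b.val := not_lt.mpr h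
      simp [this]
  rw [Fin.sum_univ_castSucc (f := fun i => Fmap k x i), Fin.sum_univ_castSucc (f := x)]
  have hlt : ∀ i : Fin k, Fmap k x i.castSucc = x i.castSucc ^ 2 + 2 * x i.castSucc * x (Fin.last k) := by
    intro i
    have : (i.castSucc).val < k := by simp [i.isLt]
    simp [Fmap, this]
  have hl : Fmap k x (Fin.last k) = x (Fin.last k) ^ 2 +
      2 * ∑ a : Fin k, ∑ b : Fin k, (if a.val < b.val then x a.castSucc * x b.castSucc else 0) := by
    have : ¬ (Fin.last k).val < k := by simp
    rw [Fmap]; simp only [this, if_false, hT]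
  simp only [hlt, hl]
  rw [Finset.sum_add_distrib]
  have h5 := sq_sum k (fun i => x i.castSucc)
  rw [show (∑ x_1 : Fin k, 2 * x x_1.castSucc * x (Fin.last k))
      = 2 * (∑ i : Fin k, x i.castSucc) * x (Fin.last k) by
    rw [Finset.mul_sum, Finset.sum_mul]]
  nlinarith [h5]

lemma Fmap_coord (k : ℕ) (x : Fin (k + 1) → ℝ) (j : Fin (k + 1)) (hj : j.val < k) :
    Fmap k x j = x j * (x j + 2 * x (Fin.last k)) := by
  simp only [Fmap, if_pos hj]; ring

lemma Fmap_pos (k : ℕ) (x : Fin (k + 1) → ℝ) (hx : ∀ i, 0 < x i) :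
    ∀ i, 0 < Fmap k x i := by
  intro i
  by_cases hi : i.val < k
  · rw [Fmap_coord k x i hi]
    have := hx i; have := hx (Fin.last k)
    positivity
  · simp only [Fmap, if_neg hi]
    have hT : (0:ℝ) ≤ ∑ a : Fin (k + 1), ∑ b : Fin (k + 1),
        (if a.val < b.val ∧ b.val < k then x a * x b else 0) := by
      refine Finset.sum_nonneg fun a _ => Finset.sum_nonneg fun b _ => ?_
      split
      · exact le_of_lt (mul_pos (hx a) (hx b))
      · exact le_refl 0
    have := hx (Fin.last k)
    nlinarith

set_option maxHeartbeats 1000000 in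
/-- Under the hypotheses of Theorem 1(b), the sequences p_{i+1}(n),…,p_k(n)
(0-indexed: coordinates i,…,k−1 of F^n(p)) all converge to zero. -/
theorem small_coordinates_tendsto_zero (k : ℕ) (hk : 2 ≤ k)
    (p : Fin (k + 1) → ℝ) (hp : p ∈ simplex k)
    (hsort : ∀ j : ℕ, (hj : j + 1 < k) →
      p ⟨j + 1, by omega⟩ ≤ p ⟨j, by omega⟩)
    (i : ℕ) (hi1 : 1 ≤ i) (hik : i < k)
    (heq : ∀ j : ℕ, (hj : j < i) → p ⟨j, by omega⟩ = p 0)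
    (hlt : p ⟨i, by omega⟩ < p 0) :
    ∀ j : ℕ, (hij : i ≤ j) → (hjk : j < k) →
      Tendsto (fun n => (Fmap k)^[n] p ⟨j, by omega⟩) atTop (𝓝 0) := by
  obtain ⟨hps, hpp⟩ := hp
  set q : ℕ → Fin (k + 1) → ℝ := fun n => (Fmap k)^[n] p with hq
  have hqs : ∀ n, q (n + 1) = Fmap k (q n) := fun n => Function.iterate_succ_apply' _ _ _
  have hpos : ∀ n i, 0 < q n i := by
    intro n
    induction n with
    | zero => exact hpp
    | succ n ih => rw [hqs n]; exact Fmap_pos k (q n) ih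
  have hsum : ∀ n, ∑ i, q n i = 1 := by
    intro n
    induction n with
    | zero => exact hps
    | succ n ih => rw [hqs n, Fmap_sum, ih]; norm_num
  have hle1 : ∀ n (a : Fin (k + 1)), q n a ≤ 1 := by
    intro n a
    rw [← hsum n]
    exact Finset.single_le_sum (fun b _ => (hpos n b).le) (Finset.mem_univ a)
  -- monotonicity of the first k coordinates at time 0
  have gen : ∀ d a : ℕ, (h : a + d < k) → p ⟨a + d, by omega⟩ ≤ p ⟨a, by omega⟩ := by
    intro d
    induction d with
    | zero => intro a h; exact le_refl _
    | succ d ih =>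
      intro a h
      have h1 : a + d + 1 < k := by omega
      calc p ⟨a + (d + 1), by omega⟩ ≤ p ⟨a + d, by omega⟩ := hsort (a + d) h1
        _ ≤ p ⟨a, by omega⟩ := ih a (by omega)
  have hmono : ∀ n (a b : ℕ), (hab : a ≤ b) → (hb : b < k) →
      q n ⟨b, by omega⟩ ≤ q n ⟨a, by omega⟩ := by
    intro n
    induction n with
    | zero =>
      intro a b hab hb
      have e : a + (b - a) = b := by omega
      have := gen (b - a) a (by omega)
      simpa [e, hq] using this
    | succ n ih =>
      intro a b hab hb
      have ha : a < k := by omega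
      rw [hqs n, Fmap_coord k (q n) ⟨b, by omega⟩ hb, Fmap_coord k (q n) ⟨a, by omega⟩ ha]
      have h1 := ih a b hab hb
      have h2 : (0:ℝ) < q n ⟨b, by omega⟩ := hpos n _
      have h3 : (0:ℝ) < q n (Fin.last k) := hpos n _
      nlinarith
  set i0 : Fin (k + 1) := ⟨0, by omega⟩ with hi0
  -- lower bound for the last coordinate
  have hLge : ∀ n, 1 - (k : ℝ) * q n i0 ≤ q n (Fin.last k) := by
    intro n
    have hsplit : ∑ a, q n a = (∑ j : Fin k, q n j.castSucc) + q n (Fin.last k) :=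
      Fin.sum_univ_castSucc _
    have hS : (∑ j : Fin k, q n j.castSucc) ≤ (k : ℝ) * q n i0 := by
      have : ∀ j : Fin k, q n j.castSucc ≤ q n i0 := by
        intro j
        have := hmono n 0 j.val (Nat.zero_le _) j.isLt
        convert this using 2 <;> rfl
      calc (∑ j : Fin k, q n j.castSucc) ≤ ∑ _j : Fin k, q n i0 :=
            Finset.sum_le_sum fun j _ => this j
        _ = (k : ℝ) * q n i0 := by simp [mul_comm]
    have := hsum n
    linarith [hsplit ▸ this, hS]
  set m : ℝ := min (p i0) ((2 * (k : ℝ) - 1)⁻¹ ^ 2) with hm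
  have hkR : (2 : ℝ) ≤ (k : ℝ) := by exact_mod_cast hk
  have hden : (0:ℝ) < 2 * (k : ℝ) - 1 := by linarith
  have hmpos : 0 < m := lt_min (hpp i0) (by positivity)
  have hm2 : m ≤ (2 * (k : ℝ) - 1)⁻¹ ^ 2 := min_le_right _ _
  have hminv : (2 * (k : ℝ) - 1) * (2 * (k : ℝ) - 1)⁻¹ = 1 := mul_inv_cancel₀ (ne_of_gt hden)
  have hP0 : ∀ n, m ≤ q n i0 := by
    intro n
    induction n with
    | zero => exact min_le_left _ _
    | succ n ih =>
      have h0k : (i0 : Fin (k+1)).val < k := by simp [hi0]; omega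
      rw [hqs n, Fmap_coord k (q n) i0 h0k]
      set P := q n i0
      set L := q n (Fin.last k)
      have hP : 0 < P := hpos n i0
      have hL : 0 < L := hpos n (Fin.last k)
      have hLg : 1 - (k : ℝ) * P ≤ L := hLge n
      rcases le_or_gt P ((2 * (k : ℝ) - 1)⁻¹) with hc | hc
      · -- then P + 2L ≥ 1
        have h1 : (2 * (k : ℝ) - 1) * P ≤ 1 := by
          calc (2 * (k : ℝ) - 1) * P ≤ (2 * (k : ℝ) - 1) * (2 * (k : ℝ) - 1)⁻¹ :=
                mul_le_mul_of_nonneg_left hc hden.le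
            _ = 1 := hminv
        have h2 : 1 ≤ P + 2 * L := by nlinarith
        nlinarith
      · have hinv : (0:ℝ) < (2 * (k : ℝ) - 1)⁻¹ := by positivity
        have h1 : (2 * (k : ℝ) - 1)⁻¹ ^ 2 < P * P := by nlinarith
        nlinarith
  -- the key geometric estimate
  set a : ℝ := p ⟨i, by omega⟩ with hadef
  set b : ℝ := p i0 with hbdef
  have hb0 : (0:ℝ) < b := hpp i0
  have ha0 : (0:ℝ) < a := hpp _
  have hab : a < b := by
    have : p 0 = p i0 := by norm_num [hi0]
    rw [hadef, hbdef, ← this]; exact hlt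
  have hb1 : b ≤ 1 := hle1 0 i0
  have hm1 : m ≤ b := min_le_left _ _
  have hr1 : a / b < 1 := (div_lt_one hb0).mpr hab
  have hr0 : 0 < a / b := div_pos ha0 hb0
  set ρ : ℝ := 1 - m * (1 - a / b) / 2 with hρ
  have hρ1 : ρ < 1 := by
    have h' : (0:ℝ) < 1 - a / b := by linarith
    have : 0 < m * (1 - a / b) / 2 := by positivity
    rw [hρ]; linarith
  have hρ0 : 0 ≤ ρ := by
    have h1 : m ≤ 1 := le_trans hm1 hb1
    have h2 : m * (1 - a / b) ≤ 1 * 1 :=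
      mul_le_mul h1 (by linarith) (by linarith) (by norm_num)
    rw [hρ]; linarith
  have key : ∀ n, q n ⟨i, by omega⟩ ≤ (a / b) * ρ ^ n * q n i0 := by
    intro n
    induction n with
    | zero =>
      have e : q 0 ⟨i, by omega⟩ = a := rfl
      have e2 : q 0 i0 = b := rfl
      rw [e2, pow_zero, show a / b * 1 * b = a by field_simp]
      exact le_of_eq e
    | succ n ih =>
      have hik' : ((⟨i, by omega⟩ : Fin (k+1))).val < k := hik
      have h0k : (i0 : Fin (k+1)).val < k := by simp [hi0]; omega
      rw [hqs n, Fmap_coord k (q n) ⟨i, by omega⟩ hik', Fmap_coord k (q n) i0 h0k]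
      set Pi := q n ⟨i, by omega⟩
      set P := q n i0
      set L := q n (Fin.last k)
      have hPi : 0 < Pi := hpos n _
      have hP : 0 < P := hpos n _
      have hL : 0 < L := hpos n _
      have hL1 : L ≤ 1 := hle1 n _
      have hPL : P + L ≤ 1 := by
        have hne : i0 ≠ Fin.last k := by
          intro e
          have := congrArg Fin.val e
          simp [hi0, Fin.val_last] at this
          omega
        have hsub : ({i0, Fin.last k} : Finset (Fin (k+1))) ⊆ Finset.univ :=
          Finset.subset_univ _
        have := Finset.sum_le_sum_of_subset_of_nonneg hsub
          (fun c _ _ => (hpos n c).le)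
        rw [Finset.sum_pair hne, hsum n] at this
        exact this
      have hmP : m ≤ P := hP0 n
      have hρn : ρ ^ n ≤ 1 := pow_le_one₀ hρ0 hρ1.le
      have h1 : Pi ≤ (a / b) * P := by
        have h5 := mul_le_mul_of_nonneg_left hρn (le_of_lt (mul_pos hr0 hP))
        calc Pi ≤ (a / b) * ρ ^ n * P := ih
          _ ≤ (a / b) * 1 * P := by nlinarith [h5]
          _ = (a / b) * P := by ring
      have e1 : 0 ≤ 1 - a / b := by linarith
      have e2 : P + 2 * L ≤ 2 := by linarith
      have h2 : Pi + 2 * L ≤ ρ * (P + 2 * L) := by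
        have e3 : (0:ℝ) ≤ m * (1 - a / b) / 2 := by positivity
        have hst : m * (1 - a / b) / 2 * (P + 2 * L) ≤ m * (1 - a / b) := by
          nlinarith [mul_le_mul_of_nonneg_left e2 e3]
        have hst2 : m * (1 - a / b) ≤ P * (1 - a / b) :=
          mul_le_mul_of_nonneg_right hmP e1
        have hst3 : P * (1 - a / b) ≤ P - Pi := by
          have : P * (a / b) ≤ (a/b) * P := by ring_nf; exact le_refl _
          nlinarith
        rw [hρ]; nlinarith
      have h3 : Pi * (Pi + 2 * L) ≤ Pi * (ρ * (P + 2 * L)) :=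
        mul_le_mul_of_nonneg_left h2 hPi.le
      have h4 : Pi * (ρ * (P + 2 * L)) ≤ ((a / b) * ρ ^ n * P) * (ρ * (P + 2 * L)) := by
        apply mul_le_mul_of_nonneg_right ih
        have : 0 ≤ P + 2 * L := by linarith
        positivity
      calc Pi * (Pi + 2 * L) ≤ ((a / b) * ρ ^ n * P) * (ρ * (P + 2 * L)) :=
            le_trans h3 h4
        _ = (a / b) * ρ ^ (n + 1) * (P * (P + 2 * L)) := by ring
  intro j hij hjk
  have bound : ∀ n, q n ⟨j, by omega⟩ ≤ (a / b) * ρ ^ n := by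
    intro n
    have h1 : q n ⟨j, by omega⟩ ≤ q n ⟨i, by omega⟩ := hmono n i j hij hjk
    have h2 := key n
    have h3 : q n i0 ≤ 1 := hle1 n i0
    have h4 : (0:ℝ) ≤ (a / b) * ρ ^ n := by positivity
    nlinarith
  have htend : Tendsto (fun n => (a / b) * ρ ^ n) atTop (𝓝 0) := by
    have := tendsto_pow_atTop_nhds_zero_of_lt_one hρ0 hρ1
    simpa using this.const_mul (a / b)
  exact squeeze_zero (fun n => (hpos n _).le) bound htend
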